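/- For every positive integer n, (1/√π) ∫_{−π/t_n}^{π/t_n} exp(−x²·φ(i·x·t_n)) dx = n^n·√(2πn)/(n!·e^n), where t_n = √(2/n) and φ(z) = 2(e^z − 1 − z)/z², φ(0) = 1. -/

import Mathlib

open Complex MeasureTheory intervalIntegral Real

noncomputable def fk (n k : ℕ) (θ : ℝ) : ℂ :=
  ((n:ℂ)^k / (Nat.factorial k)) * Complex.exp (((k:ℂ) - n) * θ * I)

lemma fk_norm (n k : ℕ) (θ : ℝ) : ‖fk n k θ‖ = (n:ℝ)^k / (Nat.factorial k) := by
  unfold fk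
  rw [norm_mul]
  have : (((k:ℂ) - n) * θ * I) = ((((k:ℝ) - n) * θ : ℝ) : ℂ) * I := by push_cast; ring
  rw [this]
  rw [Complex.norm_exp_ofReal_mul_I, mul_one,
    norm_div, norm_pow]
  simp

lemma cexp_tsum (z : ℂ) : Complex.exp z = ∑' k : ℕ, z ^ k / (Nat.factorial k) := by
  rw [Complex.exp_eq_exp_ℂ, NormedSpace.exp_eq_tsum_div]

lemma pointwise (n : ℕ) (θ : ℝ) :
    Complex.exp ((n:ℂ) * Complex.exp (θ * I) - (n:ℂ) * θ * I) = ∑' k, fk n k θ := by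
  rw [Complex.exp_sub, div_eq_mul_inv]
  nth_rewrite 1 [cexp_tsum]
  rw [← tsum_mul_right]
  congr 1 with k
  unfold fk
  rw [mul_pow, ← Complex.exp_nat_mul, ← Complex.exp_neg]
  have h : ((k:ℂ) - n) * (θ*I) = k*(θ*I) + (-((n:ℂ)*(θ*I))) := by ring
  rw [mul_assoc ((k:ℂ)-n), h, Complex.exp_add]
  ring

lemma fk_integrable (n k : ℕ) :
    IntegrableOn (fk n k) (Set.Ioc (-π) π) := by
  apply Continuous.integrableOn_Ioc
  unfold fk
  fun_prop

lemma fk_int_ne (n k : ℕ) (h : k ≠ n) :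
    ∫ θ in (-π:ℝ)..π, fk n k θ = 0 := by
  have hc : ((k:ℂ) - n) * I ≠ 0 := by
    refine mul_ne_zero (sub_ne_zero.mpr ?_) I_ne_zero
    exact_mod_cast fun hh => h hh
  have hrw : ∀ θ : ℝ, fk n k θ = ((n:ℂ)^k / (Nat.factorial k)) *
      Complex.exp ((((k:ℂ) - n) * I) * θ) := by
    intro θ; unfold fk; ring_nf
  simp_rw [hrw]
  rw [intervalIntegral.integral_const_mul, integral_exp_mul_complex hc]
  have key : Complex.exp (((k:ℂ) - n) * I * (π:ℝ)) =
      Complex.exp (((k:ℂ) - n) * I * ((-π:ℝ):ℝ)) := by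
    have h2 := Complex.exp_int_mul_two_pi_mul_I ((k:ℤ) - n)
    push_cast at h2
    rw [show ((k:ℂ) - n) * I * (π:ℝ) =
        ((k:ℂ) - n) * I * ((-π:ℝ):ℝ) + (((k:ℤ)-(n:ℤ)):ℂ)*(2*π*I) by push_cast; ring,
      Complex.exp_add]
    push_cast
    rw [h2, mul_one]
  rw [key, sub_self, zero_div, mul_zero]

lemma fk_int_eq (n : ℕ) :
    ∫ θ in (-π:ℝ)..π, fk n n θ = 2*π*(n:ℂ)^n / (Nat.factorial n) := by
  have : ∀ θ : ℝ, fk n n θ = ((n:ℂ)^n / (Nat.factorial n)) := by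
    intro θ; unfold fk; simp
  simp_rw [this]
  rw [intervalIntegral.integral_const]
  rw [Complex.real_smul]
  push_cast
  ring

lemma myFourier (n : ℕ) :
    ∫ θ in (-π:ℝ)..π, Complex.exp ((n:ℂ) * Complex.exp (θ*I) - (n:ℂ)*θ*I)
      = 2*π*(n:ℂ)^n / (Nat.factorial n) := by
  have hle : (-π:ℝ) ≤ π := by linarith [Real.pi_pos]
  simp_rw [pointwise]
  rw [intervalIntegral.integral_of_le hle]
  have hnorm : ∀ k, ∫ θ in Set.Ioc (-π) π, ‖fk n k θ‖ = (2*π) * ((n:ℝ)^k / (Nat.factorial k)) := by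
    intro k
    simp_rw [fk_norm]
    rw [setIntegral_const, Real.volume_real_Ioc, smul_eq_mul]
    rw [max_eq_left (by linarith [Real.pi_pos])]
    ring
  have hsum : Summable fun k => ∫ θ in Set.Ioc (-π) π, ‖fk n k θ‖ := by
    simp_rw [hnorm]
    exact (Real.summable_pow_div_factorial n).mul_left _
  rw [← MeasureTheory.integral_tsum_of_summable_integral_norm (fun k => fk_integrable n k) hsum]
  rw [tsum_eq_single n]
  · rw [← intervalIntegral.integral_of_le hle, fk_int_eq]
  · intro k hk
    rw [← intervalIntegral.integral_of_le hle, fk_int_ne n k hk]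




noncomputable def φC (z : ℂ) : ℂ :=
  if z = 0 then 1 else 2 * (Complex.exp z - 1 - z) / z ^ 2

noncomputable def Fn (n : ℕ) (θ : ℝ) : ℂ :=
  Complex.exp (-(n:ℂ)) * Complex.exp ((n:ℂ) * Complex.exp (θ*I) - (n:ℂ)*θ*I)

lemma Fn_integral (n : ℕ) : ∫ θ in (-π:ℝ)..π, Fn n θ
    = Complex.exp (-(n:ℂ)) * (2*π*(n:ℂ)^n / (Nat.factorial n)) := by
  unfold Fn
  rw [intervalIntegral.integral_const_mul, myFourier]

set_option maxHeartbeats 1000000 in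
theorem g_eq_inv_stirling_ratio (n : ℕ) (hn : 0 < n) :
    (Real.sqrt Real.pi : ℂ)⁻¹ *
        ∫ x in (-(Real.pi / Real.sqrt (2 / n)))..(Real.pi / Real.sqrt (2 / n)),
          Complex.exp (-((x : ℂ) ^ 2 * φC (Complex.I * x * Real.sqrt (2 / n))))
      = ((n : ℂ) ^ n * Real.sqrt (2 * Real.pi * n)) /
          ((Nat.factorial n : ℂ) * Complex.exp n) := by
  have hn' : (0:ℝ) < n := by exact_mod_cast hn
  set t : ℝ := Real.sqrt (2 / n) with htdef
  have htpos : 0 < t := Real.sqrt_pos.mpr (by positivity)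
  have ht2 : t ^ 2 = 2 / n := Real.sq_sqrt (by positivity)
  have step1 : ∀ x : ℝ,
      Complex.exp (-((x : ℂ) ^ 2 * φC (Complex.I * x * t))) = Fn n (x * t) := by
    intro x
    unfold Fn
    rw [← Complex.exp_add]
    congr 1
    by_cases hx : x = 0
    · simp [φC, hx]
    · have hxC : (x:ℂ) ≠ 0 := Complex.ofReal_ne_zero.mpr hx
      have htC : ((t:ℝ):ℂ) ≠ 0 := Complex.ofReal_ne_zero.mpr htpos.ne'
      have hz : Complex.I * (x:ℂ) * t ≠ 0 := by
        simp [I_ne_zero, hxC, htC]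
      have hz2 : ((t:ℝ):ℂ)^2 = 2/(n:ℂ) := by
        rw [← Complex.ofReal_pow, ht2]; push_cast; ring
      have hnC : (n:ℂ) ≠ 0 := Nat.cast_ne_zero.mpr hn.ne'
      rw [φC, if_neg hz]
      have harg : ((x*t : ℝ) : ℂ) * I = Complex.I * x * t := by push_cast; ring
      rw [← harg]
      set z : ℂ := ((x*t : ℝ) : ℂ) * I with hzdef
      have hzsq : z^2 = -(x:ℂ)^2 * (2/(n:ℂ)) := by
        rw [hzdef]; push_cast; rw [← hz2]; ring_nf; rw [Complex.I_sq]; ring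
      rw [hzsq]
      field_simp
      rw [hzdef]
      push_cast
      ring
  simp_rw [step1]
  rw [intervalIntegral.integral_comp_mul_right (Fn n) htpos.ne']
  have he1 : Real.pi / t * t = Real.pi := div_mul_cancel₀ _ htpos.ne'
  have he2 : -(Real.pi / t) * t = -Real.pi := by rw [neg_mul, he1]
  rw [he1, he2, Fn_integral]
  -- final algebra
  have hπ : (0:ℝ) < π := Real.pi_pos
  have h1 : Real.sqrt π ^ 2 = π := Real.sq_sqrt hπ.le
  have hsπ : Real.sqrt π ≠ 0 := by positivity
  have hreal : (Real.sqrt π)⁻¹ * t⁻¹ * (2*π) = Real.sqrt (2*π*n) := by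
    have hs : 0 ≤ (Real.sqrt π)⁻¹ * t⁻¹ * (2*π) := by positivity
    rw [← Real.sqrt_sq hs]
    congr 1
    have hst : (Real.sqrt π * t)^2 = π * (2/(n:ℝ)) := by rw [mul_pow, h1, ht2]
    field_simp
    rw [← mul_pow, hst]
    field_simp
  have hrealC : ((Real.sqrt π : ℝ):ℂ)⁻¹ * ((t:ℝ):ℂ)⁻¹ * (2*(π:ℂ)) = ((Real.sqrt (2*π*n) : ℝ):ℂ) := by
    rw [← hreal]; push_cast; ring
  rw [Complex.real_smul, Complex.exp_neg]
  have hexpn : Complex.exp (n:ℂ) ≠ 0 := Complex.exp_ne_zero _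
  have hfact : ((Nat.factorial n : ℕ):ℂ) ≠ 0 := Nat.cast_ne_zero.mpr (Nat.factorial_ne_zero n)
  have htC : ((t:ℝ):ℂ) ≠ 0 := Complex.ofReal_ne_zero.mpr htpos.ne'
  have hsπC : ((Real.sqrt π : ℝ):ℂ) ≠ 0 := Complex.ofReal_ne_zero.mpr hsπ
  rw [← hrealC]
  field_simp
  rw [one_div, Complex.ofReal_inv, mul_comm, ← mul_assoc, mul_inv_cancel₀ htC, one_mul]
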